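/- For the 11-qutrit Golay code distillation map ε' = 3(3A(z(ε))+B(z(ε)))/(4B(z(ε))) with z(ε)=(3-ε)/(8ε-6) and A, B the explicit Golay weight enumerators, the leading term of the Taylor expansion at ε=0 is ε' = (55/18)ε³ + O(ε⁴). -/

import Mathlib

open Asymptotics

/-- The simple weight enumerator `A(z)` of the 11-qutrit Golay code. -/
noncomputable def golayA : ℝ → ℝ := fun z =>
  1 + 528*z^6 + 7920*z^8 + 11000*z^9 + 23760*z^10 + 15840*z^11

/-- The simple weight enumerator `B(z)` of the dual of the 11-qutrit Golay code. -/
noncomputable def golayB : ℝ → ℝ := fun z =>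
  1 + 528*z^5 + 528*z^6 + 15840*z^7 + 40920*z^8 + 129800*z^9 + 198000*z^10 + 145824*z^11

/-- The change of variables `z(ε) = (3-ε)/(8ε-6)`. -/
noncomputable def zEps (ε : ℝ) : ℝ := (3 - ε) / (8 * ε - 6)

/-- The Golay distillation map `ε' = 3(3A(z(ε))+B(z(ε)))/(4B(z(ε)))`. -/
noncomputable def golayMap (ε : ℝ) : ℝ :=
  3 * (3 * golayA (zEps ε) + golayB (zEps ε)) / (4 * golayB (zEps ε))

/-- Numerator polynomial `P` with `A(z(ε)) = P(ε)/(8ε-6)^11`. -/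
noncomputable def golP : ℝ → ℝ := fun x =>
  (-12397455648)*x^0 + (90914674752)*x^1 + (-303048915840)*x^2 + (631351908000)*x^3 + (-959654900160)*x^4 + (1176278754816)*x^5 + (-1205461243008)*x^6 + (999562576320)*x^7 + (-625116333600)*x^8 + (270416076480)*x^9 + (-71334971136)*x^10 + (8610761376)*x^11

/-- Numerator polynomial `Q` with `B(z(ε)) = Q(ε)/(8ε-6)^11`. -/
noncomputable def golQ : ℝ → ℝ := fun x =>
  (37192366944)*x^0 + (-272744024256)*x^1 + (909146747520)*x^2 + (-1742531266080)*x^3 + (2070834258240)*x^4 + (-1468103636736)*x^5 + (401820414336)*x^6 + (319884966720)*x^7 + (-429319297440)*x^8 + (233834040000)*x^9 + (-67344203520)*x^10 + (8418025440)*x^11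

/-- The quotient polynomial: `54(3P+Q) - 220 ε³ Q = ε⁴ S`. -/
noncomputable def golS : ℝ → ℝ := fun x =>
  (16364641455360)*x^0 + (-88732722557952)*x^1 + (209770459544448)*x^2 + (-276380611246080)*x^3 + (198530711976960)*x^4 + (-31966048604160)*x^5 + (-85567544992512)*x^6 + (96299762153472)*x^7 + (-51443488800000)*x^8 + (14815724774400)*x^9 + (-1851965596800)*x^10

lemma hA_eq (ε : ℝ) (hd : 8 * ε - 6 ≠ 0) :
    golayA (zEps ε) = golP ε / (8 * ε - 6) ^ 11 := by
  simp only [golayA, zEps, golP]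
  have hd' : ε * 8 - 6 ≠ 0 := by rwa [mul_comm]
  field_simp
  ring

lemma hB_eq (ε : ℝ) (hd : 8 * ε - 6 ≠ 0) :
    golayB (zEps ε) = golQ ε / (8 * ε - 6) ^ 11 := by
  simp only [golayB, zEps, golQ]
  have hd' : ε * 8 - 6 ≠ 0 := by rwa [mul_comm]
  field_simp
  ring

lemma key_eq (ε : ℝ) (hd : 8 * ε - 6 ≠ 0) (hq : golQ ε ≠ 0) :
    golayMap ε - (55/18) * ε ^ 3 = ε ^ 4 * (golS ε / (72 * golQ ε)) := by
  have hd11 : (8 * ε - 6) ^ 11 ≠ 0 := pow_ne_zero _ hd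
  rw [golayMap, hA_eq ε hd, hB_eq ε hd]
  have hstep : 3 * (3 * (golP ε / (8 * ε - 6) ^ 11) + golQ ε / (8 * ε - 6) ^ 11) /
      (4 * (golQ ε / (8 * ε - 6) ^ 11)) = 3 * (3 * golP ε + golQ ε) / (4 * golQ ε) := by
    field_simp
  rw [hstep]
  field_simp
  simp only [golP, golQ, golS]
  ring

/-- the Golay distillation map satisfies `ε' = (55/18)ε³ + O(ε⁴)` near `ε=0`. -/
theorem golay_cubic_suppression :
    (fun ε : ℝ => golayMap ε - (55/18) * ε ^ 3) =O[nhds (0 : ℝ)] (fun ε : ℝ => ε ^ 4) := by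
  have hcd : Continuous (fun ε : ℝ => 8 * ε - 6) := by continuity
  have hcq : Continuous golQ := by unfold golQ; continuity
  have hd0 : ∀ᶠ ε in nhds (0 : ℝ), 8 * ε - 6 ≠ 0 :=
    (hcd.tendsto 0).eventually_ne (by norm_num)
  have hq0 : ∀ᶠ ε in nhds (0 : ℝ), golQ ε ≠ 0 :=
    (hcq.tendsto 0).eventually_ne (by norm_num [golQ])
  have heq : (fun ε : ℝ => golayMap ε - (55/18) * ε ^ 3) =ᶠ[nhds (0 : ℝ)]
      (fun ε : ℝ => ε ^ 4 * (golS ε / (72 * golQ ε))) := by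
    filter_upwards [hd0, hq0] with ε hd hq using key_eq ε hd hq
  have hg : (fun ε : ℝ => golS ε / (72 * golQ ε)) =O[nhds (0 : ℝ)]
      (fun _ : ℝ => (1 : ℝ)) := by
    have hct : ContinuousAt (fun ε : ℝ => golS ε / (72 * golQ ε)) 0 := by
      apply ContinuousAt.div
      · exact (by unfold golS; continuity : Continuous golS).continuousAt
      · exact ((continuous_const.mul hcq)).continuousAt
      · norm_num [golQ]
    exact hct.isBigO_one ℝ
  calc (fun ε : ℝ => golayMap ε - (55/18) * ε ^ 3)
      =O[nhds (0 : ℝ)] (fun ε : ℝ => ε ^ 4 * (golS ε / (72 * golQ ε))) :=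
        heq.isBigO.trans (isBigO_refl _ _)
    _ =O[nhds (0 : ℝ)] (fun ε : ℝ => ε ^ 4) := by
        simpa using (isBigO_refl (fun ε : ℝ => ε ^ 4) (nhds 0)).mul hg
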